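/- The expected first-spy precision of diffusion-by-proxy at any honest node v satisfies D_FS(v) = (p + 1/n) · E[1/(1+Z_v)] ≥ (p/(1−p))(1 − e^{p−1}), where Z_v ~ Binomial(ñ−1, 1/n) and ñ = (1−p)n. -/
import Mathlib

lemma binom_inv_sum (m : ℕ) (x : ℝ) (hx : x ≠ 0) :
    ∑ k ∈ Finset.range (m + 1),
        (m.choose k : ℝ) * x ^ k * (1 - x) ^ (m - k) * (1 / (1 + (k : ℝ)))
      = (1 - (1 - x) ^ (m + 1)) / (((m : ℝ) + 1) * x) := by
  have hm1 : ((m : ℝ) + 1) * x ≠ 0 := by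
    apply mul_ne_zero _ hx
    positivity
  rw [eq_div_iff hm1, Finset.sum_mul]
  have expand : ∑ k ∈ Finset.range (m + 2),
      x ^ k * (1 - x) ^ (m + 1 - k) * ((m+1).choose k : ℝ) = 1 := by
    have h := add_pow x (1 - x) (m + 1)
    simp only [add_sub_cancel, one_pow] at h
    exact h.symm
  rw [Finset.sum_range_succ'] at expand
  simp only [pow_zero, Nat.choose_zero_right, Nat.cast_one, one_mul, mul_one,
    Nat.sub_zero] at expand
  have key : ∑ k ∈ Finset.range (m + 1),
      x ^ (k + 1) * (1 - x) ^ (m + 1 - (k + 1)) * ((m+1).choose (k+1) : ℝ)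
      = 1 - (1 - x) ^ (m + 1) := by linarith [expand]
  rw [← key]
  apply Finset.sum_congr rfl
  intro k hk
  have hcast : ((m : ℝ) + 1) * (m.choose k : ℝ) = ((m+1).choose (k+1) : ℝ) * ((k : ℝ) + 1) := by
    have := Nat.add_one_mul_choose_eq m k
    have : ((m + 1) * m.choose k : ℕ) = ((m+1).choose (k+1) * (k+1) : ℕ) := by
      simpa [Nat.succ_eq_add_one] using this
    exact_mod_cast congrArg (Nat.cast : ℕ → ℝ) this
  have hk1 : (1 : ℝ) + (k : ℝ) ≠ 0 := by positivity
  have hsub : m + 1 - (k + 1) = m - k := by omega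
  rw [hsub]
  field_simp
  linear_combination x * x ^ k * (1 - x) ^ (m - k) * hcast

theorem stmt_11 (n ntil : ℕ) (p : ℝ) (hn : 1 ≤ n) (hp0 : 0 < p) (hp1 : p < 1)
    (hnt : (ntil : ℝ) = (1 - p) * (n : ℝ)) (hnt1 : 1 ≤ ntil) :
    (p / (1 - p)) * (1 - Real.exp (p - 1)) ≤
      (p + 1 / (n : ℝ)) *
        ∑ k ∈ Finset.range ntil,
          ((ntil - 1).choose k : ℝ) * (1 / (n : ℝ)) ^ k *
            (1 - 1 / (n : ℝ)) ^ (ntil - 1 - k) * (1 / ((1 : ℝ) + (k : ℝ))) := by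
  set x : ℝ := 1 / (n : ℝ) with hxdef
  have hn0 : (0 : ℝ) < (n : ℝ) := by exact_mod_cast hn
  have hx0 : 0 < x := by positivity
  have hx1 : x ≤ 1 := by
    rw [hxdef]
    rw [div_le_one hn0]
    exact_mod_cast hn
  obtain ⟨m, hm⟩ : ∃ m, ntil = m + 1 := ⟨ntil - 1, by omega⟩
  have hsum := binom_inv_sum m x (ne_of_gt hx0)
  have hrw : ∑ k ∈ Finset.range ntil,
      ((ntil - 1).choose k : ℝ) * x ^ k * (1 - x) ^ (ntil - 1 - k) * (1 / ((1:ℝ) + (k : ℝ)))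
      = (1 - (1 - x) ^ ntil) / ((ntil : ℝ) * x) := by
    subst hm
    simpa [Nat.add_sub_cancel] using hsum
  rw [hrw]
  have hntpos : (0 : ℝ) < (ntil : ℝ) := by exact_mod_cast hnt1
  have hnx : (ntil : ℝ) * x = 1 - p := by
    rw [hxdef, hnt]; field_simp
  rw [hnx]
  have hep : Real.exp (p - 1) < 1 := by
    rw [Real.exp_lt_one_iff]; linarith
  have hpow : (1 - x) ^ ntil ≤ Real.exp (p - 1) := by
    have h1 : 1 - x ≤ Real.exp (-x) := by
      have := Real.add_one_le_exp (-x)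
      linarith
    have h2 : (1 - x) ^ ntil ≤ (Real.exp (-x)) ^ ntil :=
      pow_le_pow_left₀ (by linarith) h1 ntil
    have h3 : (Real.exp (-x)) ^ ntil = Real.exp (-(ntil * x)) := by
      rw [← Real.exp_nat_mul]; ring_nf
    rw [h3, hnx] at h2
    have : -(1 - p) = p - 1 := by ring
    rwa [this] at h2
  have h1p : (0 : ℝ) < 1 - p := by linarith
  have hb1 : 0 ≤ 1 - Real.exp (p - 1) := by linarith
  rw [div_mul_eq_mul_div, mul_div_assoc', div_le_div_iff₀ h1p h1p]
  have hmul : p * (1 - Real.exp (p - 1)) ≤ (p + x) * (1 - (1 - x) ^ ntil) := by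
    apply mul_le_mul (by linarith) (by linarith) hb1 (by linarith)
  nlinarith [hmul, h1p]
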